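/- Under the Newton tracking primal–dual iteration, assume additionally that ε − α·λ_max(I − 𝐖) > 4L_f²/μ_f and set δ := 1 − 4L_f²/(μ_f(ε − α·λ_max(I − 𝐖))) > 0 and Q := εI − α(I − 𝐖). Then for every t ≥ 0: (x* − x^t)ᵀQ(x* − x^t) − (x* − x^{t+1})ᵀQ(x* − x^{t+1}) + (1/α)(‖v* − v^t‖² − ‖v* − v^{t+1}‖²) ≥ δ²·(ε − α·λ_max(I − 𝐖))·‖x^t − x^{t+1}‖² + (1/α)‖v^{t+1} − v^t‖² + (μ_f·δ/(1+δ))·‖x* − x^{t+1}‖². -/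

import Mathlib

open Matrix Kronecker
open scoped InnerProductSpace

noncomputable section

/-- Local decision space `ℝ^p`. -/
abbrev Ep (p : ℕ) : Type := EuclideanSpace ℝ (Fin p)

/-- Stacked space `ℝ^{np}`. -/
abbrev Vnp (n p : ℕ) : Type := EuclideanSpace ℝ (Fin n × Fin p)

/-- The `i`-th block `x_i ∈ ℝ^p` of a stacked vector `x ∈ ℝ^{np}`. -/
def blk {n p : ℕ} (x : Vnp n p) (i : Fin n) : Ep p := WithLp.toLp 2 (fun j => x (i, j))

/-- Aggregate objective `f(x) = ∑ i, f_i(x_i)`. -/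
def aggF {n p : ℕ} (f : Fin n → Ep p → ℝ) (x : Vnp n p) : ℝ := ∑ i, f i (blk x i)

/-- Stacked gradient `∇f(x) = [∇f_1(x_1); …; ∇f_n(x_n)]`. -/
def aggGrad {n p : ℕ} (g : Fin n → Ep p → Ep p) (x : Vnp n p) : Vnp n p :=
  WithLp.toLp 2 (fun ij : Fin n × Fin p => g ij.1 (blk x ij.1) ij.2)

/-- Block-diagonal Hessian `∇²f(x)` applied to `w`. -/
def aggHess {n p : ℕ} (h : Fin n → Ep p → (Ep p →L[ℝ] Ep p)) (x w : Vnp n p) : Vnp n p :=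
  WithLp.toLp 2 (fun ij : Fin n × Fin p => h ij.1 (blk x ij.1) (blk w ij.1) ij.2)

/-- `𝐖 = W ⊗ I_p`. -/
def bigW {n : ℕ} (p : ℕ) (W : Matrix (Fin n) (Fin n) ℝ) :
    Matrix (Fin n × Fin p) (Fin n × Fin p) ℝ :=
  W ⊗ₖ (1 : Matrix (Fin p) (Fin p) ℝ)

/-- `I − 𝐖`. -/
def IWmat {n : ℕ} (p : ℕ) (W : Matrix (Fin n) (Fin n) ℝ) :
    Matrix (Fin n × Fin p) (Fin n × Fin p) ℝ :=
  1 - bigW p W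

/-- Largest eigenvalue of a (square, real) matrix. -/
def lamMax {m : Type*} [Fintype m] [DecidableEq m] (A : Matrix m m ℝ) : ℝ :=
  sSup {r : ℝ | Module.End.HasEigenvalue (Matrix.toLin' A) r}

/-- Smallest nonzero eigenvalue of a (square, real) matrix. -/
def lamMinNZ {m : Type*} [Fintype m] [DecidableEq m] (A : Matrix m m ℝ) : ℝ :=
  sInf {r : ℝ | r ≠ 0 ∧ Module.End.HasEigenvalue (Matrix.toLin' A) r}

/-- The square root of a positive semidefinite matrix, as `Matrix.PosSemidef.sqrt` was defined
in the older Mathlib (removed since). -/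
def Matrix.PosSemidef.sqrt {m : Type*} [Fintype m] [DecidableEq m] {A : Matrix m m ℝ}
    (hA : A.PosSemidef) : Matrix m m ℝ :=
  (hA.1.eigenvectorUnitary : Matrix m m ℝ) * diagonal ((↑) ∘ (fun i => √(hA.1.eigenvalues i)))
    * (star hA.1.eigenvectorUnitary : Matrix m m ℝ)

/-- `δ = 1 − 4L_f²/(μ_f(ε − α·λ_max(I−𝐖)))`. -/
def deltaNT (μf Lf α ε lmax : ℝ) : ℝ := 1 - 4 * Lf ^ 2 / (μf * (ε - α * lmax))

/-- The contraction constant `δ'` from the linear convergence theorem. -/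
def deltaNT' (μf Lf α ε lmax lminhat β φ : ℝ) : ℝ :=
  min (μf * deltaNT μf Lf α ε lmax /
        ((1 + deltaNT μf Lf α ε lmax) * (ε + β * φ * Lf ^ 2 / (α * lminhat))))
      (α * (deltaNT μf Lf α ε lmax) ^ 2 * (ε - α * lmax) * lminhat /
        (β * ε ^ 2 / (β - 1) + β * φ * (2 * Lf + α * lmax) ^ 2 / (φ - 1)))

/-! ### Auxiliary lemmas -/

lemma NT_sqrt_isHermitian {m : Type*} [Fintype m] [DecidableEq m] {A : Matrix m m ℝ}
    (hA : A.PosSemidef) : hA.sqrt.IsHermitian := by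
  unfold Matrix.PosSemidef.sqrt
  rw [Matrix.star_eq_conjTranspose]
  exact isHermitian_mul_mul_conjTranspose _ (isHermitian_diagonal _)

lemma NT_sqrt_mul_self {m : Type*} [Fintype m] [DecidableEq m] {A : Matrix m m ℝ}
    (hA : A.PosSemidef) : hA.sqrt * hA.sqrt = A := by
  unfold Matrix.PosSemidef.sqrt
  conv_rhs => rw [hA.1.spectral_theorem, Unitary.conjStarAlgAut_apply]
  have hUU : (star (hA.1.eigenvectorUnitary : Matrix m m ℝ)) * hA.1.eigenvectorUnitary = 1 :=
    Unitary.star_mul_self_of_mem hA.1.eigenvectorUnitary.prop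
  simp only [Matrix.mul_assoc]
  rw [← Matrix.mul_assoc (star _) _ (_ * _), hUU, Matrix.one_mul, ← Matrix.mul_assoc (diagonal _) (diagonal _),
    diagonal_mul_diagonal]
  congr 3
  ext i
  simp [Real.mul_self_sqrt (hA.eigenvalues_nonneg i)]

section MatrixAux

variable {m : Type*} [Fintype m] [DecidableEq m]

lemma NT_symm_inner (M : Matrix m m ℝ) (hM : M.IsHermitian) (x y : EuclideanSpace ℝ m) :
    ⟪Matrix.toEuclideanLin M x, y⟫_ℝ = ⟪x, Matrix.toEuclideanLin M y⟫_ℝ := by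
  conv_lhs => rw [← hM.eq, Matrix.toEuclideanLin_conjTranspose_eq_adjoint]
  exact LinearMap.adjoint_inner_left _ _ _

lemma NT_toEuclideanLin_mul_apply (M N : Matrix m m ℝ) (x : EuclideanSpace ℝ m) :
    Matrix.toEuclideanLin (M * N) x = Matrix.toEuclideanLin M (Matrix.toEuclideanLin N x) := by
  simp [Matrix.toEuclideanLin_apply, Matrix.mulVec_mulVec]

lemma NT_eigen_set (M : Matrix m m ℝ) (hM : M.IsHermitian) :
    {r : ℝ | Module.End.HasEigenvalue (Matrix.toLin' M) r} = Set.range hM.eigenvalues := by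
  have h2 : spectrum ℝ M = Set.range hM.eigenvalues := by
    conv_lhs => rw [hM.spectral_theorem, Unitary.conjStarAlgAut_apply]
    have hu : (star (↑hM.eigenvectorUnitary : Matrix m m ℝ))
        = ↑(Unitary.toUnits hM.eigenvectorUnitary)⁻¹ := rfl
    have hu2 : ((↑hM.eigenvectorUnitary : Matrix m m ℝ))
        = ↑(Unitary.toUnits hM.eigenvectorUnitary) := rfl
    rw [hu, hu2, spectrum.units_conjugate, spectrum_diagonal]
    ext r
    constructor
    · rintro ⟨i, hi⟩; exact ⟨i, by simpa using hi⟩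
    · rintro ⟨i, hi⟩; exact ⟨i, by simpa using hi⟩
  ext r
  rw [Set.mem_setOf_eq, Module.End.hasEigenvalue_iff_mem_spectrum]
  have : (Matrix.toLin' M) = Matrix.toLinAlgEquiv' M := rfl
  rw [this, AlgEquiv.spectrum_eq Matrix.toLinAlgEquiv', h2]

lemma NT_quad_le_lamMax (M : Matrix m m ℝ) (hM : M.IsHermitian) (x : EuclideanSpace ℝ m) :
    ⟪x, Matrix.toEuclideanLin M x⟫_ℝ ≤ lamMax M * ‖x‖ ^ 2 := by
  set b := hM.eigenvectorBasis with hb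
  have heig : ∀ j, Matrix.toEuclideanLin M (b j) = hM.eigenvalues j • b j := by
    intro j
    ext i
    exact congrFun (hM.mulVec_eigenvectorBasis j) i
  have hle : ∀ j, hM.eigenvalues j ≤ lamMax M := by
    intro j
    apply le_csSup
    · rw [NT_eigen_set M hM]; exact (Set.finite_range _).bddAbove
    · rw [NT_eigen_set M hM]; exact ⟨j, rfl⟩
  have hexp : ⟪x, Matrix.toEuclideanLin M x⟫_ℝ
      = ∑ j, hM.eigenvalues j * (⟪x, b j⟫_ℝ * ⟪b j, x⟫_ℝ) := by
    rw [← OrthonormalBasis.sum_inner_mul_inner b x (Matrix.toEuclideanLin M x)]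
    congr 1
    ext j
    rw [← NT_symm_inner M hM, heig j, real_inner_smul_left]
    ring
  have hnorm : ‖x‖ ^ 2 = ∑ j, ⟪x, b j⟫_ℝ * ⟪b j, x⟫_ℝ := by
    rw [OrthonormalBasis.sum_inner_mul_inner b x x, real_inner_self_eq_norm_sq]
  rw [hexp, hnorm, Finset.mul_sum]
  apply Finset.sum_le_sum
  intro j _
  have hsq : 0 ≤ ⟪x, b j⟫_ℝ * ⟪b j, x⟫_ℝ := by
    rw [real_inner_comm (b j) x]; exact mul_self_nonneg _
  exact mul_le_mul_of_nonneg_right (hle j) hsq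

end MatrixAux

section CalcAux

variable {E : Type*} [NormedAddCommGroup E] [InnerProductSpace ℝ E]

lemma NT_symmCLM_norm_bound (T : E →L[ℝ] E)
    (hsymm : ∀ u v, ⟪T u, v⟫_ℝ = ⟪u, T v⟫_ℝ) {c : ℝ} (hc : 0 ≤ c)
    (hq : ∀ w, |⟪T w, w⟫_ℝ| ≤ c * ‖w‖ ^ 2) (u : E) : ‖T u‖ ≤ c * ‖u‖ := by
  have key2 : ∀ u v : E, 2 * ⟪T u, v⟫_ℝ ≤ c * (‖u‖ ^ 2 + ‖v‖ ^ 2) := by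
    intro u v
    have e1 : ⟪T (u + v), u + v⟫_ℝ - ⟪T (u - v), u - v⟫_ℝ = 4 * ⟪T u, v⟫_ℝ := by
      have htv : ⟪T v, u⟫_ℝ = ⟪T u, v⟫_ℝ := by
        rw [hsymm v u, real_inner_comm]
      simp only [map_add, map_sub, inner_add_left, inner_add_right, inner_sub_left,
        inner_sub_right]
      linarith
    have h1 := (abs_le.1 (hq (u + v))).2
    have h2 := (abs_le.1 (hq (u - v))).1
    have hpar : ‖u + v‖ ^ 2 + ‖u - v‖ ^ 2 = 2 * (‖u‖ ^ 2 + ‖v‖ ^ 2) := by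
      rw [@norm_add_sq_real, @norm_sub_sq_real]; ring
    nlinarith [e1]
  have inner_le : ∀ u v : E, ⟪T u, v⟫_ℝ ≤ c * ‖u‖ * ‖v‖ := by
    intro u v
    rcases eq_or_ne ‖u‖ 0 with hu | hu
    · have : u = 0 := norm_eq_zero.1 hu
      simp [this, hu]
    rcases eq_or_ne ‖v‖ 0 with hv | hv
    · have : v = 0 := norm_eq_zero.1 hv
      simp [this, hv]
    have hu' : 0 < ‖u‖ := lt_of_le_of_ne (norm_nonneg u) (Ne.symm hu)
    have hv' : 0 < ‖v‖ := lt_of_le_of_ne (norm_nonneg v) (Ne.symm hv)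
    have := key2 (‖v‖ • u) (‖u‖ • v)
    rw [_root_.map_smul] at this
    simp only [inner_smul_left, inner_smul_right, norm_smul, Real.norm_eq_abs,
      abs_of_nonneg (norm_nonneg u), abs_of_nonneg (norm_nonneg v), RCLike.ofReal_real_eq_id,
      id_eq, conj_trivial] at this
    have h2 : 2 * (‖v‖ * ‖u‖) * ⟪T u, v⟫_ℝ ≤ c * (2 * (‖u‖^2 * ‖v‖^2)) := by nlinarith [this]
    have hpos : 0 < ‖v‖ * ‖u‖ := mul_pos hv' hu'
    nlinarith [h2]
  rcases eq_or_ne ‖T u‖ 0 with h0 | h0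
  · rw [h0]; positivity
  have hpos : 0 < ‖T u‖ := lt_of_le_of_ne (norm_nonneg _) (Ne.symm h0)
  have := inner_le u (T u)
  rw [real_inner_self_eq_norm_sq] at this
  nlinarith [this]

variable [CompleteSpace E]

lemma NT_hess_symm {f : E → ℝ} {g : E → E} {h : E → E →L[ℝ] E}
    (hg : ∀ z, HasGradientAt f (g z) z) (hh : ∀ z, HasFDerivAt g (h z) z) (z v w : E) :
    ⟪h z v, w⟫_ℝ = ⟪h z w, v⟫_ℝ := by
  set D := InnerProductSpace.toDual ℝ E with hD
  set Dc := (D : E ≃ₗᵢ[ℝ] _).toContinuousLinearEquiv.toContinuousLinearMap with hDc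
  have hf' : ∀ y, HasFDerivAt f (D (g y)) y := fun y => (hg y).hasFDerivAt
  have hcomp : HasFDerivAt (fun y => D (g y)) (Dc.comp (h z)) z := by
    exact (Dc.hasFDerivAt).comp z (hh z)
  have hsy := second_derivative_symmetric (f' := fun y => D (g y)) (f'' := Dc.comp (h z))
    hf' hcomp v w
  simpa [hD, hDc, InnerProductSpace.toDual_apply_apply] using hsy

variable {μ L : ℝ} {f : E → ℝ} {g : E → E} {h : E → E →L[ℝ] E}

lemma NT_hess_norm (hg : ∀ z, HasGradientAt f (g z) z) (hh : ∀ z, HasFDerivAt g (h z) z)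
    (hμ : 0 < μ) (hμL : μ ≤ L)
    (hlow : ∀ z w, μ * ‖w‖ ^ 2 ≤ ⟪(h z) w, w⟫_ℝ) (hup : ∀ z w, ⟪(h z) w, w⟫_ℝ ≤ L * ‖w‖ ^ 2)
    (z w : E) : ‖h z w‖ ≤ L * ‖w‖ := by
  apply NT_symmCLM_norm_bound (h z)
  · intro u v
    rw [NT_hess_symm hg hh z u v, real_inner_comm]
  · linarith
  · intro w'
    rw [abs_le]
    constructor
    · have := hlow z w'
      nlinarith [sq_nonneg ‖w'‖, hμ.le]
    · exact hup z w'

lemma NT_grad_lip (hg : ∀ z, HasGradientAt f (g z) z) (hh : ∀ z, HasFDerivAt g (h z) z)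
    (hμ : 0 < μ) (hμL : μ ≤ L)
    (hlow : ∀ z w, μ * ‖w‖ ^ 2 ≤ ⟪(h z) w, w⟫_ℝ) (hup : ∀ z w, ⟪(h z) w, w⟫_ℝ ≤ L * ‖w‖ ^ 2)
    (u u' : E) : ‖g u - g u'‖ ≤ L * ‖u - u'‖ := by
  have hbound : ∀ z : E, ‖h z‖ ≤ L := fun z =>
    ContinuousLinearMap.opNorm_le_bound _ (by linarith) (NT_hess_norm hg hh hμ hμL hlow hup z)
  exact Convex.norm_image_sub_le_of_norm_hasFDerivWithin_le
    (fun z _ => (hh z).hasFDerivWithinAt) (fun z _ => hbound z) convex_univ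
    (Set.mem_univ u') (Set.mem_univ u)

lemma NT_grad_mono (hh : ∀ z, HasFDerivAt g (h z) z)
    (hlow : ∀ z w, μ * ‖w‖ ^ 2 ≤ ⟪(h z) w, w⟫_ℝ)
    (u u' : E) : μ * ‖u - u'‖ ^ 2 ≤ ⟪g u - g u', u - u'⟫_ℝ := by
  set d := u - u' with hd
  set φ : ℝ → ℝ := fun t => ⟪d, g (u' + t • d)⟫_ℝ - μ * ‖d‖ ^ 2 * t with hφ
  have hderiv : ∀ t : ℝ, HasDerivAt φ (⟪d, h (u' + t • d) d⟫_ℝ - μ * ‖d‖ ^ 2) t := by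
    intro t
    have hc : HasDerivAt (fun t : ℝ => u' + t • d) d t := by
      simpa using ((hasDerivAt_id t).smul_const d).const_add u'
    have hgc : HasDerivAt (fun t : ℝ => g (u' + t • d)) (h (u' + t • d) d) t :=
      (hh (u' + t • d)).comp_hasDerivAt t hc
    have hin : HasDerivAt (fun t : ℝ => ⟪d, g (u' + t • d)⟫_ℝ)
        (⟪d, h (u' + t • d) d⟫_ℝ) t := by
      exact (innerSL ℝ d).hasFDerivAt.comp_hasDerivAt t hgc
    have := hin.sub ((hasDerivAt_id t).const_mul (μ * ‖d‖ ^ 2))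
    simp only [mul_one] at this
    exact this
  have hmono : Monotone φ := by
    apply monotone_of_deriv_nonneg
    · intro t; exact (hderiv t).differentiableAt
    · intro t
      rw [(hderiv t).deriv]
      have := hlow (u' + t • d) d
      rw [real_inner_comm]
      linarith
  have h01 := hmono (show (0:ℝ) ≤ 1 by norm_num)
  have he : u' + (1:ℝ) • d = u := by rw [hd]; simp
  have h0 : φ 0 = ⟪d, g u'⟫_ℝ := by simp [hφ]
  have h1 : φ 1 = ⟪d, g u⟫_ℝ - μ * ‖d‖ ^ 2 := by
    simp only [hφ]; rw [he]; ring
  rw [h0, h1] at h01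
  have c1 : ⟪g u, d⟫_ℝ = ⟪d, g u⟫_ℝ := real_inner_comm _ _
  have c2 : ⟪g u', d⟫_ℝ = ⟪d, g u'⟫_ℝ := real_inner_comm _ _
  rw [inner_sub_left]
  linarith

end CalcAux

section AggAux

variable {n p : ℕ}

lemma NT_inner_blocks (x y : Vnp n p) : ⟪x, y⟫_ℝ = ∑ i, ⟪blk x i, blk y i⟫_ℝ := by
  simp [PiLp.inner_apply, Fintype.sum_prod_type, blk]

lemma NT_norm_blocks (x : Vnp n p) : ‖x‖ ^ 2 = ∑ i, ‖blk x i‖ ^ 2 := by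
  rw [← real_inner_self_eq_norm_sq, NT_inner_blocks]
  congr 1; ext i; rw [real_inner_self_eq_norm_sq]

variable {μ L : ℝ} {f : Fin n → Ep p → ℝ} {g : Fin n → Ep p → Ep p}
  {h : Fin n → Ep p → (Ep p →L[ℝ] Ep p)}

lemma NT_agg_mono (hh : ∀ i z, HasFDerivAt (g i) (h i z) z)
    (hlow : ∀ i z w, μ * ‖w‖ ^ 2 ≤ ⟪(h i z) w, w⟫_ℝ)
    (u w : Vnp n p) : μ * ‖u - w‖ ^ 2 ≤ ⟪aggGrad g u - aggGrad g w, u - w⟫_ℝ := by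
  rw [NT_inner_blocks, NT_norm_blocks, Finset.mul_sum]
  apply Finset.sum_le_sum
  intro i _
  exact NT_grad_mono (fun z => hh i z) (fun z w' => hlow i z w') (blk u i) (blk w i)

lemma NT_agg_bound (hg : ∀ i z, HasGradientAt (f i) (g i z) z)
    (hh : ∀ i z, HasFDerivAt (g i) (h i z) z)
    (hμ : 0 < μ) (hμL : μ ≤ L)
    (hlow : ∀ i z w, μ * ‖w‖ ^ 2 ≤ ⟪(h i z) w, w⟫_ℝ)
    (hup : ∀ i z w, ⟪(h i z) w, w⟫_ℝ ≤ L * ‖w‖ ^ 2)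
    (u w : Vnp n p) :
    ‖aggGrad g u - aggGrad g w - aggHess h u (u - w)‖ ≤ 2 * L * ‖u - w‖ := by
  have hL : 0 < L := lt_of_lt_of_le hμ hμL
  have hblock : ∀ i, ‖blk (aggGrad g u - aggGrad g w - aggHess h u (u - w)) i‖
      ≤ 2 * L * ‖blk (u - w) i‖ := by
    intro i
    have heq : blk (aggGrad g u - aggGrad g w - aggHess h u (u - w)) i
        = (g i (blk u i) - g i (blk w i)) - h i (blk u i) (blk (u - w) i) := rfl
    rw [heq]
    have h1 : ‖g i (blk u i) - g i (blk w i)‖ ≤ L * ‖blk u i - blk w i‖ :=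
      NT_grad_lip (fun z => hg i z) (fun z => hh i z) hμ hμL
        (fun z w' => hlow i z w') (fun z w' => hup i z w') (blk u i) (blk w i)
    have h2 : ‖h i (blk u i) (blk (u - w) i)‖ ≤ L * ‖blk (u - w) i‖ :=
      NT_hess_norm (fun z => hg i z) (fun z => hh i z) hμ hμL
        (fun z w' => hlow i z w') (fun z w' => hup i z w') (blk u i) (blk (u - w) i)
    have h3 : blk (u - w) i = blk u i - blk w i := rfl
    calc ‖(g i (blk u i) - g i (blk w i)) - h i (blk u i) (blk (u - w) i)‖
        ≤ ‖g i (blk u i) - g i (blk w i)‖ + ‖h i (blk u i) (blk (u - w) i)‖ := norm_sub_le _ _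
      _ ≤ L * ‖blk u i - blk w i‖ + L * ‖blk (u - w) i‖ := add_le_add h1 h2
      _ = 2 * L * ‖blk (u - w) i‖ := by rw [← h3]; ring
  have hsq : ‖aggGrad g u - aggGrad g w - aggHess h u (u - w)‖ ^ 2
      ≤ (2 * L * ‖u - w‖) ^ 2 := by
    rw [NT_norm_blocks]
    have : (2 * L * ‖u - w‖) ^ 2 = ∑ i, (2 * L) ^ 2 * ‖blk (u - w) i‖ ^ 2 := by
      rw [← Finset.mul_sum, ← NT_norm_blocks]; ring
    rw [this]
    apply Finset.sum_le_sum
    intro i _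
    have := hblock i
    nlinarith [norm_nonneg (blk (aggGrad g u - aggGrad g w - aggHess h u (u - w)) i),
      norm_nonneg (blk (u - w) i)]
  nlinarith [norm_nonneg (aggGrad g u - aggGrad g w - aggHess h u (u - w)),
    norm_nonneg (u - w), mul_nonneg (mul_nonneg (by norm_num : (0:ℝ) ≤ 2) hL.le)
      (norm_nonneg (u - w))]

end AggAux

lemma NT_final_scalar (μf Lf θ δ nb ns : ℝ) (hμ : 0 < μf) (hθ : 0 < θ) (hδ0 : 0 < δ)
    (hrel : μf * ((1 - δ) * θ) = 4 * Lf ^ 2) (hnb : 0 ≤ nb) (hns : 0 ≤ ns) :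
    δ ^ 2 * θ * ns ^ 2 + μf * δ / (1 + δ) * nb ^ 2
      ≤ 2 * μf * nb ^ 2 + θ * ns ^ 2 - 4 * Lf * (ns * nb) := by
  have hK : 0 < 1 + δ := by linarith
  have h1 : μf * (1 + δ) * (2 * μf * nb ^ 2 + θ * ns ^ 2 - 4 * Lf * (ns * nb)
      - (δ ^ 2 * θ * ns ^ 2 + μf * δ / (1 + δ) * nb ^ 2))
      = (2 * Lf * (1 + δ) * ns - μf * nb) ^ 2 + μf ^ 2 * (1 + δ) * nb ^ 2 := by
    field_simp
    linear_combination ((1 + δ) ^ 3 * ns ^ 2 - δ * (1 + δ) ^ 2 * ns ^ 2) * hrel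
  nlinarith [sq_nonneg (2 * Lf * (1 + δ) * ns - μf * nb), mul_pos hμ hK,
    mul_nonneg (mul_nonneg (sq_nonneg μf) hK.le) (sq_nonneg nb)]

set_option maxHeartbeats 1000000 in
/-- The refined descent inequality (Step 3, equation (a56)) of the Newton tracking
primal–dual iteration, under `ε − α·λ_max(I−𝐖) > 4L_f²/μ_f`. -/
theorem newton_tracking_refined_descent_inequality
    {n p : ℕ} (hn : 0 < n) (hp : 0 < p)
    (W : Matrix (Fin n) (Fin n) ℝ)
    (hWnonneg : ∀ i j, 0 ≤ W i j) (hWsymm : W.IsSymm)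
    (hWstoch : W *ᵥ (fun _ => (1 : ℝ)) = fun _ => 1)
    (hWker : ∀ y : Fin n → ℝ, (1 - W) *ᵥ y = 0 ↔ ∃ c : ℝ, y = fun _ => c)
    (hpsd : (IWmat p W).PosSemidef)
    (f : Fin n → Ep p → ℝ) (g : Fin n → Ep p → Ep p)
    (h : Fin n → Ep p → (Ep p →L[ℝ] Ep p))
    (μf Lf : ℝ) (hμpos : 0 < μf) (hμL : μf ≤ Lf)
    (hC2 : ∀ i, ContDiff ℝ 2 (f i))
    (hg : ∀ i z, HasGradientAt (f i) (g i z) z)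
    (hh : ∀ i z, HasFDerivAt (g i) (h i z) z)
    (hlow : ∀ i z w, μf * ‖w‖ ^ 2 ≤ ⟪(h i z) w, w⟫_ℝ)
    (hup : ∀ i z w, ⟪(h i z) w, w⟫_ℝ ≤ Lf * ‖w‖ ^ 2)
    (α ε : ℝ) (hα : 0 < α) (hε : 0 < ε)
    (x v : ℕ → Vnp n p)
    (hprimal : ∀ t, aggHess h (x t) (x t - x (t + 1)) + ε • (x t - x (t + 1)) =
      aggGrad g (x t) + Matrix.toEuclideanLin hpsd.sqrt (v t)
        + α • Matrix.toEuclideanLin (IWmat p W) (x t))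
    (hdual : ∀ t, v (t + 1) = v t + α • Matrix.toEuclideanLin hpsd.sqrt (x (t + 1)))
    (xs vs : Vnp n p)
    (hK1 : aggGrad g xs + Matrix.toEuclideanLin hpsd.sqrt vs = 0)
    (hK2 : Matrix.toEuclideanLin hpsd.sqrt xs = 0)
    (hcond : 4 * Lf ^ 2 / μf < ε - α * lamMax (IWmat p W)) :
    ∀ t : ℕ,
      ⟪xs - x t, ε • (xs - x t) - α • Matrix.toEuclideanLin (IWmat p W) (xs - x t)⟫_ℝ
        - ⟪xs - x (t + 1),
            ε • (xs - x (t + 1))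
              - α • Matrix.toEuclideanLin (IWmat p W) (xs - x (t + 1))⟫_ℝ
        + (1 / α) * (‖vs - v t‖ ^ 2 - ‖vs - v (t + 1)‖ ^ 2)
      ≥ (deltaNT μf Lf α ε (lamMax (IWmat p W))) ^ 2 * (ε - α * lamMax (IWmat p W))
            * ‖x t - x (t + 1)‖ ^ 2
        + (1 / α) * ‖v (t + 1) - v t‖ ^ 2
        + μf * deltaNT μf Lf α ε (lamMax (IWmat p W))
            / (1 + deltaNT μf Lf α ε (lamMax (IWmat p W))) * ‖xs - x (t + 1)‖ ^ 2 := by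
  intro t
  have hLf : 0 < Lf := lt_of_lt_of_le hμpos hμL
  set lam := lamMax (IWmat p W) with hlam
  set δ := deltaNT μf Lf α ε lam with hδdef
  set AL := Matrix.toEuclideanLin (IWmat p W) with hAL
  set UL := Matrix.toEuclideanLin hpsd.sqrt with hUL
  set s := x t - x (t + 1) with hs
  set b := xs - x (t + 1) with hb
  set dv := v (t + 1) - v t with hdvd
  -- scalar facts about δ
  have hθpos : 0 < ε - α * lam := lt_trans (by positivity) hcond
  have hfrac : 4 * Lf ^ 2 / (μf * (ε - α * lam)) < 1 := by
    rw [div_lt_one (by positivity)]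
    have h' := (div_lt_iff₀ hμpos).1 hcond
    nlinarith [h']
  have hδpos : 0 < δ := by
    rw [hδdef, deltaNT]; linarith [hfrac]
  have hrel : μf * ((1 - δ) * (ε - α * lam)) = 4 * Lf ^ 2 := by
    rw [hδdef, deltaNT]
    field_simp
    ring
  -- matrix facts
  have hAsymm : ∀ y z : Vnp n p, ⟪z, AL y⟫_ℝ = ⟪y, AL z⟫_ℝ := by
    intro y z
    rw [hAL, ← NT_symm_inner _ hpsd.1, real_inner_comm]
  have hUsymm : ∀ y z : Vnp n p, ⟪y, UL z⟫_ℝ = ⟪UL y, z⟫_ℝ := by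
    intro y z
    rw [hUL, ← NT_symm_inner _ (NT_sqrt_isHermitian hpsd)]
  have hUU : ∀ z, UL (UL z) = AL z := by
    intro z
    rw [hUL, hAL, ← NT_toEuclideanLin_mul_apply, NT_sqrt_mul_self hpsd]
  have hquad : ∀ z : Vnp n p, ⟪z, AL z⟫_ℝ ≤ lam * ‖z‖ ^ 2 := by
    intro z
    rw [hAL, hlam]
    exact NT_quad_le_lamMax _ hpsd.1 z
  -- dual step
  have hdv : dv = α • UL (x (t + 1)) := by
    rw [hdvd, hdual t]; exact add_sub_cancel_left _ _
  -- key identity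
  have key : aggGrad g (x t) - aggGrad g xs + (UL (v (t + 1)) - UL vs)
      = aggHess h (x t) s + (ε • s - α • AL s) := by
    have h2 : UL (v (t + 1)) = UL (v t) + α • AL (x (t + 1)) := by
      rw [hdual t, map_add, _root_.map_smul, hUU]
    have h3 : aggGrad g xs = -(UL vs) := eq_neg_of_add_eq_zero_left hK1
    have h1' : aggGrad g (x t) = aggHess h (x t) (x t - x (t + 1)) + ε • (x t - x (t + 1))
        - UL (v t) - α • AL (x t) := by
      rw [hprimal t]; abel
    rw [hs, h1', h2, h3]
    simp only [map_sub, smul_sub]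
    abel
  -- Q-expansion
  have expandQ : ⟪b - s, ε • (b - s) - α • AL (b - s)⟫_ℝ
      = ⟪b, ε • b - α • AL b⟫_ℝ - 2 * ⟪b, ε • s - α • AL s⟫_ℝ
        + ⟪s, ε • s - α • AL s⟫_ℝ := by
    have h1 : ⟪s, AL b⟫_ℝ = ⟪b, AL s⟫_ℝ := hAsymm b s
    have h2 : ⟪s, b⟫_ℝ = ⟪b, s⟫_ℝ := real_inner_comm _ _
    simp only [map_sub, smul_sub, inner_sub_left, inner_sub_right, real_inner_smul_right]
    linear_combination (-ε) * h2 + α * h1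
  have hab : xs - x t = b - s := by rw [hb, hs]; abel
  set Y := ⟪v (t + 1) - vs, dv⟫_ℝ with hY
  have hv2 : ‖vs - v t‖ ^ 2 - ‖vs - v (t + 1)‖ ^ 2 = -(2 * Y) + ‖dv‖ ^ 2 := by
    have hv2' : vs - v t = (vs - v (t + 1)) + dv := by rw [hdvd]; abel
    rw [hv2', @norm_add_sq_real]
    have hneg : ⟪vs - v (t + 1), dv⟫_ℝ = -Y := by
      rw [hY, show vs - v (t + 1) = -(v (t + 1) - vs) from (neg_sub _ _).symm, inner_neg_left]
    rw [hneg]; ring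
  -- scalar consequence of key
  have keyb : ⟪b, aggGrad g (x t) - aggGrad g xs⟫_ℝ + ⟪b, UL (v (t + 1)) - UL vs⟫_ℝ
      = ⟪b, aggHess h (x t) s⟫_ℝ + ⟪b, ε • s - α • AL s⟫_ℝ := by
    have hk := congrArg (fun z : Vnp n p => ⟪b, z⟫_ℝ) key
    simpa only [inner_add_right] using hk
  have hUb : ⟪b, UL (v (t + 1)) - UL vs⟫_ℝ = -(1 / α * Y) := by
    have hw : UL (v (t + 1)) - UL vs = UL (v (t + 1) - vs) := (map_sub _ _ _).symm
    have hULb : UL b = -(UL (x (t + 1))) := by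
      rw [hb, map_sub, hK2, zero_sub]
    have hYe : Y = α * ⟪UL (x (t + 1)), v (t + 1) - vs⟫_ℝ := by
      rw [hY, real_inner_comm, hdv, real_inner_smul_left]
    rw [hw, hUsymm b, hULb, inner_neg_left, hYe]
    field_simp
  -- splitting of the gradient difference
  have hsplit : ⟪b, aggGrad g (x t) - aggGrad g xs⟫_ℝ
      = ⟪b, aggGrad g (x t) - aggGrad g (x (t + 1)) - aggHess h (x t) s⟫_ℝ
        + ⟪b, aggHess h (x t) s⟫_ℝ
        + ⟪b, aggGrad g (x (t + 1)) - aggGrad g xs⟫_ℝ := by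
    rw [← inner_add_right, ← inner_add_right]
    congr 1
    abel
  -- inequality pieces
  have hQs : (ε - α * lam) * ‖s‖ ^ 2 ≤ ⟪s, ε • s - α • AL s⟫_ℝ := by
    rw [inner_sub_right, real_inner_smul_right, real_inner_smul_right,
      real_inner_self_eq_norm_sq]
    have hq := hquad s
    nlinarith [hα.le]
  have hmono : μf * ‖b‖ ^ 2 ≤ ⟪aggGrad g xs - aggGrad g (x (t + 1)), b⟫_ℝ := by
    have := NT_agg_mono hh hlow xs (x (t + 1))
    rw [← hb] at this
    exact this
  have hB2 : ⟪b, aggGrad g (x (t + 1)) - aggGrad g xs⟫_ℝ ≤ -(μf * ‖b‖ ^ 2) := by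
    have hcm : ⟪b, aggGrad g (x (t + 1)) - aggGrad g xs⟫_ℝ
        = -⟪aggGrad g xs - aggGrad g (x (t + 1)), b⟫_ℝ := by
      rw [real_inner_comm, show aggGrad g (x (t + 1)) - aggGrad g xs
        = -(aggGrad g xs - aggGrad g (x (t + 1))) from (neg_sub _ _).symm, inner_neg_left]
    rw [hcm]
    linarith [hmono]
  have hwnorm : ‖aggGrad g (x t) - aggGrad g (x (t + 1)) - aggHess h (x t) s‖
      ≤ 2 * Lf * ‖s‖ := by
    have := NT_agg_bound hg hh hμpos hμL hlow hup (x t) (x (t + 1))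
    rw [← hs] at this
    exact this
  have hB1 : ⟪b, aggGrad g (x t) - aggGrad g (x (t + 1)) - aggHess h (x t) s⟫_ℝ
      ≤ 2 * Lf * (‖s‖ * ‖b‖) := by
    calc ⟪b, aggGrad g (x t) - aggGrad g (x (t + 1)) - aggHess h (x t) s⟫_ℝ
        ≤ ‖b‖ * ‖aggGrad g (x t) - aggGrad g (x (t + 1)) - aggHess h (x t) s‖ :=
          real_inner_le_norm _ _
      _ ≤ ‖b‖ * (2 * Lf * ‖s‖) := mul_le_mul_of_nonneg_left hwnorm (norm_nonneg b)
      _ = 2 * Lf * (‖s‖ * ‖b‖) := by ring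
  have hscalar : δ ^ 2 * (ε - α * lam) * ‖s‖ ^ 2 + μf * δ / (1 + δ) * ‖b‖ ^ 2
      ≤ 2 * μf * ‖b‖ ^ 2 + (ε - α * lam) * ‖s‖ ^ 2 - 4 * Lf * (‖s‖ * ‖b‖) :=
    NT_final_scalar μf Lf (ε - α * lam) δ ‖b‖ ‖s‖ hμpos hθpos hδpos hrel
      (norm_nonneg b) (norm_nonneg s)
  -- final assembly
  rw [ge_iff_le, hab, expandQ, hv2]
  linarith [keyb, hUb, hsplit, hQs, hB1, hB2, hscalar]
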